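/- arXiv:2512.25043 — 2 statements merged into one kernel-verified Lean document; each statement's English description precedes it below -/
import Mathlib

section
/- Let m ≥ 1 be an integer, let G' be a finite simple graph, let T ⊆ E(G') be an edge set, and let S ⊆ V(G') be a set of exactly 24m vertices such that: (a) every two distinct vertices of S are adjacent in G'; (b) every vertex of S is incident to at most 2 edges of T having both endpoints in S; and (c) at most 3m edges of G' have exactly one endpoint in S. Then for every A' ⊆ V(G') such that both A' ∩ S and S \ A' are nonempty, the number of edges of T in δ_{G'}(A') having at least one endpoint in S is strictly less than one third of the number of edges of δ_{G'}(A') having at least one endpoint in S. -/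
/-- The edge cut `δ_G(A)`: the set of edges of `G` with exactly one endpoint in `A`. -/
def cutSet {V : Type*} (G : SimpleGraph V) (A : Set V) : Set (Sym2 V) :=
  {e | e ∈ G.edgeSet ∧ ∃ u ∈ A, ∃ v ∉ A, e = s(u, v)}

lemma my_ncard_prod {α β : Type*} (s : Set α) (t : Set β) :
    (s ×ˢ t).ncard = s.ncard * t.ncard := by
  rw [← Nat.card_coe_set_eq, Nat.card_congr (Equiv.Set.prod s t), Nat.card_prod,
    Nat.card_coe_set_eq, Nat.card_coe_set_eq]

lemma my_ncard_biUnion_le' {α ι : Type*} [Finite α] (X : Finset ι)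
    (F : ι → Set α) (k : ℕ) (hb : ∀ i ∈ X, (F i).ncard ≤ k) :
    (⋃ i ∈ X, F i).ncard ≤ k * X.card := by
  classical
  induction X using Finset.induction with
  | empty => simp
  | @insert a s ha ih =>
    rw [Finset.set_biUnion_insert, Finset.card_insert_of_notMem ha]
    calc (F a ∪ ⋃ i ∈ s, F i).ncard ≤ (F a).ncard + (⋃ i ∈ s, F i).ncard :=
          Set.ncard_union_le _ _
      _ ≤ k + k * s.card := Nat.add_le_add (hb a (Finset.mem_insert_self a s))
            (ih fun i hi => hb i (Finset.mem_insert_of_mem hi))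
      _ = k * (s.card + 1) := by ring

lemma my_ncard_biUnion_le {α ι : Type*} [Finite α] (X : Set ι) (hX : X.Finite)
    (F : ι → Set α) (k : ℕ) (hb : ∀ i ∈ X, (F i).ncard ≤ k) :
    (⋃ i ∈ X, F i).ncard ≤ k * X.ncard := by
  have h1 : (⋃ i ∈ X, F i) = ⋃ i ∈ hX.toFinset, F i := by
    simp [Set.Finite.mem_toFinset]
  rw [h1, Set.ncard_eq_toFinset_card _ hX]
  exact my_ncard_biUnion_le' hX.toFinset F k (fun i hi => hb i (hX.mem_toFinset.1 hi))

lemma my_numeric (m a b : ℕ) (hm : 1 ≤ m) (ha : 1 ≤ a) (hb : 1 ≤ b)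
    (hab : a + b = 24 * m) (hmin : a ≤ b) : 3 * (2 * a + 3 * m) < a * b := by
  have hb12 : 12 * m ≤ b := by omega
  rcases Nat.lt_or_ge a 2 with h1 | h2
  · have : a = 1 := by omega
    subst this
    simp only [one_mul]
    omega
  · have h1 : 6 * a + 9 * m < 12 * (a * m) := by nlinarith
    calc 3 * (2 * a + 3 * m) = 6 * a + 9 * m := by ring
      _ < 12 * (a * m) := h1
      _ = a * (12 * m) := by ring
      _ ≤ a * b := Nat.mul_le_mul_left a hb12

/-- Abstract form of Lemma 6: if `S` is a clique of `24 m` vertices, every vertex of `S`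
is incident to at most `2` edges of `T` internal to `S`, and at most `3 m` edges leave
`S`, then any cut splitting `S` has `T`-thickness strictly below `1/3` on the portion
of the cut touching `S`. -/
theorem cut_splitting_clique_is_thin
    {V' : Type} [Fintype V'] (m : ℕ) (hm : 1 ≤ m)
    (G' : SimpleGraph V') (T : Set (Sym2 V')) (hT : T ⊆ G'.edgeSet)
    (S : Set V') (hScard : S.ncard = 24 * m)
    (hclique : ∀ u ∈ S, ∀ v ∈ S, u ≠ v → G'.Adj u v)
    (hTdeg : ∀ v ∈ S, {e ∈ T | v ∈ e ∧ ∀ u ∈ e, u ∈ S}.ncard ≤ 2)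
    (hleave : (cutSet G' S).ncard ≤ 3 * m) :
    ∀ A' : Set V', (A' ∩ S).Nonempty → (S \ A').Nonempty →
      3 * {e ∈ cutSet G' A' | e ∈ T ∧ ∃ u ∈ S, u ∈ e}.ncard <
        {e ∈ cutSet G' A' | ∃ u ∈ S, u ∈ e}.ncard := by
  intro A' hA hB
  classical
  set A : Set V' := A' ∩ S with hAdef
  set B : Set V' := S \ A' with hBdef
  have hSfin : S.Finite := Set.toFinite _
  have hABdisj : ∀ x, x ∈ A → x ∉ B := by
    intro x hx hx'
    exact hx'.2 hx.1
  have hcardAB : A.ncard + B.ncard = 24 * m := by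
    rw [← hScard]
    rw [← Set.ncard_union_eq (by
      rw [Set.disjoint_left]; exact hABdisj) (Set.toFinite _) (Set.toFinite _)]
    congr 1
    ext x
    constructor
    · rintro (h | h)
      · exact h.2
      · exact h.1
    · intro hx
      by_cases hxA : x ∈ A'
      · exact Or.inl ⟨hxA, hx⟩
      · exact Or.inr ⟨hx, hxA⟩
  set a := A.ncard with hadef
  set b := B.ncard with hbdef
  have ha1 : 1 ≤ a := (Set.ncard_pos (Set.toFinite _)).2 hA
  have hb1 : 1 ≤ b := (Set.ncard_pos (Set.toFinite _)).2 hB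
  -- Denominator lower bound: a * b
  set D : Set (Sym2 V') := {e ∈ cutSet G' A' | ∃ u ∈ S, u ∈ e} with hDdef
  have hDlb : a * b ≤ D.ncard := by
    have himg : (fun p : V' × V' => s(p.1, p.2)) '' (A ×ˢ B) ⊆ D := by
      rintro e ⟨⟨u, v⟩, ⟨huA, hvB⟩, rfl⟩
      have huv : u ≠ v := fun h => hABdisj u huA (h ▸ hvB)
      refine ⟨⟨(hclique u huA.2 v hvB.1 huv), u, huA.1, v, hvB.2, rfl⟩, u, huA.2, ?_⟩
      simp
    have hinj : Set.InjOn (fun p : V' × V' => s(p.1, p.2)) (A ×ˢ B) := by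
      rintro ⟨u, v⟩ ⟨huA, hvB⟩ ⟨u', v'⟩ ⟨huA', hvB'⟩ h
      simp only [Sym2.eq, Sym2.rel_iff', Prod.mk.injEq, Prod.swap_prod_mk] at h
      rcases h with ⟨h1, h2⟩ | ⟨h1, h2⟩
      · simp [Prod.ext_iff, h1, h2]
      · exact absurd (h1 ▸ hvB') (hABdisj u huA)
    calc a * b = (A ×ˢ B).ncard := (my_ncard_prod A B).symm
      _ = ((fun p : V' × V' => s(p.1, p.2)) '' (A ×ˢ B)).ncard :=
          (Set.ncard_image_of_injOn hinj).symm
      _ ≤ D.ncard := Set.ncard_le_ncard himg (Set.toFinite _)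
  -- Numerator upper bound
  set N : Set (Sym2 V') := {e ∈ cutSet G' A' | e ∈ T ∧ ∃ u ∈ S, u ∈ e} with hNdef
  -- the internal part
  set Nint : Set (Sym2 V') := {e ∈ cutSet G' A' | e ∈ T ∧ ∀ u ∈ e, u ∈ S} with hNintdef
  have hsplit : N ⊆ Nint ∪ cutSet G' S := by
    rintro e ⟨⟨he, u, huA, v, hvA, rfl⟩, heT, w, hwS, hwmem⟩
    by_cases huS : u ∈ S
    · by_cases hvS : v ∈ S
      · left
        refine ⟨⟨he, u, huA, v, hvA, rfl⟩, heT, ?_⟩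
        intro x hx
        rcases Sym2.mem_iff.1 hx with rfl | rfl
        · exact huS
        · exact hvS
      · right
        exact ⟨he, u, huS, v, hvS, rfl⟩
    · have hvS : v ∈ S := by
        rcases Sym2.mem_iff.1 hwmem with rfl | rfl
        · exact absurd hwS huS
        · exact hwS
      right
      exact ⟨he, v, hvS, u, huS, Sym2.eq_swap⟩
  have hNub : N.ncard ≤ Nint.ncard + 3 * m :=
    le_trans (le_trans (Set.ncard_le_ncard hsplit (Set.toFinite _))
      (Set.ncard_union_le _ _)) (Nat.add_le_add_left hleave _)
  -- Nint bounded by 2 * min: it's inside the biUnion over A and over B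
  have hNintbd : ∀ X : Set V', X ⊆ S → (∀ e ∈ Nint, ∃ v ∈ X, v ∈ e) →
      Nint.ncard ≤ 2 * X.ncard := by
    intro X hXS hX
    have hsub : Nint ⊆ ⋃ v ∈ X, {e ∈ T | v ∈ e ∧ ∀ u ∈ e, u ∈ S} := by
      intro e he
      obtain ⟨v, hvX, hve⟩ := hX e he
      exact Set.mem_biUnion hvX ⟨he.2.1, hve, he.2.2⟩
    refine le_trans (Set.ncard_le_ncard hsub (Set.toFinite _)) ?_
    exact my_ncard_biUnion_le X (Set.toFinite _) _ 2 (fun v hv => hTdeg v (hXS hv))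
  have hmemA : ∀ e ∈ Nint, ∃ v ∈ A, v ∈ e := by
    rintro e ⟨⟨he, u, huA, v, hvA, rfl⟩, heT, hall⟩
    exact ⟨u, ⟨huA, hall u (by simp)⟩, by simp⟩
  have hmemB : ∀ e ∈ Nint, ∃ v ∈ B, v ∈ e := by
    rintro e ⟨⟨he, u, huA, v, hvA, rfl⟩, heT, hall⟩
    exact ⟨v, ⟨hall v (by simp), hvA⟩, by simp⟩
  rcases le_total a b with hab | hab
  · have h1 : Nint.ncard ≤ 2 * a := hNintbd A Set.inter_subset_right hmemA
    have := my_numeric m a b hm ha1 hb1 hcardAB hab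
    calc 3 * N.ncard ≤ 3 * (2 * a + 3 * m) := by omega
      _ < a * b := this
      _ ≤ D.ncard := hDlb
  · have h1 : Nint.ncard ≤ 2 * b := hNintbd B Set.diff_subset hmemB
    have := my_numeric m b a hm hb1 ha1 (by omega) hab
    calc 3 * N.ncard ≤ 3 * (2 * b + 3 * m) := by omega
      _ < b * a := this
      _ = a * b := Nat.mul_comm b a
      _ ≤ D.ncard := hDlb
end

section
/- For all integers m and a with m ≥ 1 and 1 ≤ a ≤ 12m, the inequality (3m + 2a)/(3m + a(24m − a)) ≤ 1/8 + 1/(6m) holds, and moreover 1/8 + 1/(6m) < 1/3 (all quantities interpreted in the rational numbers). -/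
/-- The numerical inequality at the heart of Lemma 6: for `m ≥ 1` and `1 ≤ a ≤ 12 m`,
`(3m + 2a)/(3m + a(24m − a)) ≤ 1/8 + 1/(6m)`, and `1/8 + 1/(6m) < 1/3`. -/
theorem thickness_numerical_bound (m a : ℤ) (hm : 1 ≤ m) (ha : 1 ≤ a)
    (ha' : a ≤ 12 * m) :
    ((3 * m + 2 * a : ℚ) / (3 * m + a * (24 * m - a)) ≤
        1 / 8 + 1 / (6 * (m : ℚ))) ∧
      (1 / 8 + 1 / (6 * (m : ℚ)) < 1 / 3) := by
  have hmq : (1 : ℚ) ≤ (m : ℚ) := by exact_mod_cast hm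
  have haq : (1 : ℚ) ≤ (a : ℚ) := by exact_mod_cast ha
  have haq' : (a : ℚ) ≤ 12 * m := by exact_mod_cast ha'
  have hden : (0 : ℚ) < 3 * m + a * (24 * m - a) := by nlinarith
  have hm0 : (0 : ℚ) < (m : ℚ) := by linarith
  have hrw : (1 : ℚ) / 8 + 1 / (6 * (m : ℚ)) = (3 * m + 4) / (24 * m) := by
    field_simp; ring
  constructor
  · rw [hrw, div_le_div_iff₀ hden (by positivity)]
    have key : (0:ℚ) ≤ ((a:ℚ) - 1) * (12 * m - a) := by nlinarith
    have key2 : (0:ℚ) ≤ 4 * (a:ℚ) * (12 * m - a) := by nlinarith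
    nlinarith [mul_nonneg (le_of_lt hm0) key, mul_nonneg (mul_nonneg (le_of_lt hm0) (le_of_lt hm0)) (by linarith : (0:ℚ) ≤ (a:ℚ) - 1)]
  · rw [hrw, div_lt_div_iff₀ (by positivity) (by norm_num)]
    nlinarith
end
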